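/- arXiv:1509.06724 — 3 statements merged into one kernel-verified Lean document; each statement's English description precedes it below -/
import Mathlib

section
/- A finitely generated group has only finitely many subgroups of any given finite index k. -/
open MulAction

/-- Homs from a f.g. group to a finite monoid form a finite set. -/
lemma finite_monoidHom_of_fg (G N : Type*) [Group G] [Group.FG G] [Monoid N]
    [Finite N] : Finite (G →* N) := by
  obtain ⟨S, hS⟩ := Group.FG.out (G := G)
  have : Function.Injective (fun φ : G →* N => fun s : S => φ s) := by
    intro φ ψ h
    refine MonoidHom.eq_of_eqOn_dense (s := (S : Set G)) hS ?_
    intro x hx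
    exact congrFun h ⟨x, hx⟩
  exact Finite.of_injective _ this

/-- M. Hall's theorem: a finitely generated group has only finitely many
subgroups of any given finite index `k`. -/
theorem finitely_many_subgroups_of_index (G : Type*) [Group G] [Group.FG G]
    (k : ℕ) (hk : 0 < k) :
    {H : Subgroup G | H.index = k}.Finite := by
  have : Finite (G →* Equiv.Perm (Fin k)) := finite_monoidHom_of_fg G _
  rw [Set.finite_coe_iff.symm]
  -- build an injection from the set into homs × Fin k
  have key : ∀ H : {H : Subgroup G | H.index = k},
      ∃ p : (G →* Equiv.Perm (Fin k)) × Fin k,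
        (H : Subgroup G) = Subgroup.comap p.1 (MulAction.stabilizer _ p.2) := by
    rintro ⟨H, hH⟩
    have hfin : Finite (G ⧸ H) := by
      refine Nat.finite_of_card_ne_zero ?_
      rw [← Subgroup.index, hH]; omega
    let e : (G ⧸ H) ≃ Fin k := Finite.equivFinOfCardEq (by rw [← Subgroup.index, hH])
    let φ : G →* Equiv.Perm (Fin k) :=
      { toFun := fun g => e.permCongr (MulAction.toPermHom G (G ⧸ H) g)
        map_one' := by ext x; simp
        map_mul' := by intro a b; ext x; simp [mul_smul] }
    refine ⟨⟨φ, e ((1 : G) : G ⧸ H)⟩, ?_⟩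
    ext g
    simp only [Subgroup.mem_comap, MulAction.mem_stabilizer_iff]
    show _ ↔ φ g (e ((1 : G) : G ⧸ H)) = e ((1 : G) : G ⧸ H)
    have : φ g (e ((1 : G) : G ⧸ H)) = e (g • ((1 : G) : G ⧸ H)) := by
      simp [φ, Equiv.permCongr_apply]
    rw [this, e.apply_eq_iff_eq]
    have : g • ((1 : G) : G ⧸ H) = ((g : G) : G ⧸ H) := by
      simp [QuotientGroup.mk_one, smul_eq_mul, mul_one]
    rw [this, QuotientGroup.eq]
    simp
  choose f hf using key
  have hinj : Function.Injective f := by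
    intro H₁ H₂ h
    apply Subtype.ext
    rw [hf H₁, hf H₂, h]
  exact Finite.of_injective f hinj
end

section
/- Point-picking lemma: Let Σ be a compact surface with boundary in a Riemannian manifold and suppose ρ := sup_{x∈Σ} |A|(x)·min{1, d(x, ∂Σ)} is large. Then there exists a point p ∈ Σ and a radius R > 0 with λ := |A|(p) satisfying λ·R ≥ √ρ → ∞, d(p, ∂Σ) ≥ R, and sup_{x ∈ Σ ∩ B_R(p)} |A|(x)·d(x, ∂B_R(p)) = |A|(p)·R; consequently for x ∈ Σ ∩ B_R(p), |A|(x) ≤ λ·R/(R − d(x,p)). -/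
open Metric

/-- Point-picking lemma. Let `S` be a compact surface with boundary `∂S` in a Riemannian
manifold (abstracted to a metric space), with second fundamental form norm `A`. If
`ρ := sup_{x∈S} A(x)·min{1, d(x,∂S)}` is large (`ρ ≥ 1`), then there exist `p ∈ S` and
`R > 0` with `λ := A(p)` satisfying `λ·R ≥ √ρ`, `d(p,∂S) ≥ R`, and
`sup_{x ∈ S ∩ B_R(p)} A(x)·d(x, ∂B_R(p)) = A(p)·R`; consequently
`A(x) ≤ λ·R/(R − d(x,p))` on `S ∩ B_R(p)`. -/
theorem point_picking {M : Type*} [MetricSpace M] (S bdry : Set M)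
    (hS : IsCompact S) (hne : S.Nonempty)
    (A : M → ℝ) (hA : ContinuousOn A S) (hA0 : ∀ x ∈ S, 0 ≤ A x)
    (ρ : ℝ) (hρ : ρ = ⨆ x ∈ S, A x * min 1 (infDist x bdry)) (hρ1 : 1 ≤ ρ) :
    ∃ p ∈ S, ∃ R > (0:ℝ),
      Real.sqrt ρ ≤ A p * R ∧
      R ≤ infDist p bdry ∧
      (∀ x ∈ S ∩ ball p R, A x * (R - dist x p) ≤ A p * R) ∧
      (∀ x ∈ S ∩ ball p R, A x ≤ A p * R / (R - dist x p)) := by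
  -- the weighted curvature function
  set f : M → ℝ := fun x => A x * min 1 (infDist x bdry) with hf
  have hfcont : ContinuousOn f S := by
    exact hA.mul (Continuous.continuousOn (continuous_const.min (continuous_infDist_pt bdry)))
  obtain ⟨q, hqS, hqmax⟩ := hS.exists_isMaxOn hne hfcont
  set r : ℝ := min 1 (infDist q bdry) with hr
  set m : ℝ := A q * r with hm
  have hm0 : 0 ≤ m := mul_nonneg (hA0 q hqS)
    (le_min zero_le_one infDist_nonneg)
  -- the sup is at most the max value m
  have hρm : ρ ≤ m := by
    rw [hρ]
    refine Real.iSup_le (fun x => ?_) hm0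
    refine Real.iSup_le (fun hx => ?_) hm0
    exact hqmax hx
  have hm1 : 1 ≤ m := le_trans hρ1 hρm
  have hr0 : 0 < r := by
    by_contra h
    push_neg at h
    have : m ≤ 0 := mul_nonpos_of_nonneg_of_nonpos (hA0 q hqS) h
    linarith
  -- second maximization on S ∩ closedBall q r
  set K : Set M := S ∩ closedBall q r with hK
  have hKc : IsCompact K := hS.inter_right isClosed_closedBall
  have hqK : q ∈ K := ⟨hqS, by simp [hr0.le]⟩
  set g : M → ℝ := fun x => A x * (r - dist x q) with hg
  have hgcont : ContinuousOn g K := by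
    exact (hA.mono Set.inter_subset_left).mul (Continuous.continuousOn (by continuity))
  obtain ⟨p, hpK, hpmax⟩ := hKc.exists_isMaxOn ⟨q, hqK⟩ hgcont
  obtain ⟨hpS, hpB⟩ := hpK
  set R : ℝ := r - dist p q with hR
  have hgq : g q = m := by simp [hg, hm]
  have hmpR : m ≤ A p * R := by
    have h : g q ≤ g p := hpmax hqK
    rwa [hgq] at h
  have hR0 : 0 < R := by
    by_contra h
    push_neg at h
    have : A p * R ≤ 0 := mul_nonpos_of_nonneg_of_nonpos (hA0 p hpS) h
    linarith
  refine ⟨p, hpS, R, hR0, ?_, ?_, ?_, ?_⟩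
  · have hsq : Real.sqrt ρ ≤ ρ := by
      have h := Real.sqrt_le_sqrt (show ρ ≤ ρ ^ 2 by nlinarith)
      rwa [Real.sqrt_sq (by linarith)] at h
    calc Real.sqrt ρ ≤ ρ := hsq
    _ ≤ m := hρm
    _ ≤ A p * R := hmpR
  · have h1 : infDist q bdry ≤ infDist p bdry + dist q p :=
      infDist_le_infDist_add_dist
    have h2 : r ≤ infDist q bdry := min_le_right _ _
    have h3 : dist q p = dist p q := dist_comm q p
    simp only [hR]
    linarith
  · rintro x ⟨hxS, hxB⟩
    have hxp : dist x p < R := mem_ball.mp hxB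
    have hxq : dist x q ≤ dist x p + dist p q := dist_triangle x p q
    have hxK : x ∈ K := ⟨hxS, mem_closedBall.mpr (by simp only [hR] at hxp; linarith)⟩
    have h1 : g x ≤ g p := hpmax hxK
    have h2 : A x * (R - dist x p) ≤ A x * (r - dist x q) := by
      apply mul_le_mul_of_nonneg_left _ (hA0 x hxS)
      simp only [hR]; linarith
    calc A x * (R - dist x p) ≤ A x * (r - dist x q) := h2
      _ ≤ A p * (r - dist p q) := h1
      _ = A p * R := rfl
  · rintro x ⟨hxS, hxB⟩
    have hxp : dist x p < R := mem_ball.mp hxB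
    have hpos : 0 < R - dist x p := by linarith
    rw [le_div_iff₀ hpos]
    -- reuse the previous bullet's inequality
    have hxq : dist x q ≤ dist x p + dist p q := dist_triangle x p q
    have hxK : x ∈ K := ⟨hxS, mem_closedBall.mpr (by simp only [hR] at hxp; linarith)⟩
    have h1 : g x ≤ g p := hpmax hxK
    have h2 : A x * (R - dist x p) ≤ A x * (r - dist x q) := by
      apply mul_le_mul_of_nonneg_left _ (hA0 x hxS)
      simp only [hR]; linarith
    calc A x * (R - dist x p) ≤ A x * (r - dist x q) := h2
      _ ≤ A p * (r - dist p q) := h1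
      _ = A p * R := rfl
end

section
/- Abstract point-picking in a metric space: let (X,d) be a metric space, K ⊂ X compact, h : K → [0,∞) continuous, q ∈ K with h(q) > 0, and r > 0 with B_r(q) ⊂ K. Then there exists p ∈ B_r(q) ∩ K such that, with R := r − d(p,q) > 0, one has h(p)·R ≥ h(q)·r and h(x) ≤ h(p)·R/(R − d(x,p)) for all x ∈ K with d(x,p) < R. -/
open Metric

/-- Abstract point-picking in a metric space: let `K` be compact, `h : K → [0,∞)`
continuous, `q ∈ K` with `h(q) > 0`, and `r > 0` with `B_r(q) ⊆ K`. Then there is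
`p ∈ B_r(q) ∩ K` such that, with `R := r − d(p,q) > 0`, one has `h(p)·R ≥ h(q)·r` and
`h(x) ≤ h(p)·R/(R − d(x,p))` for all `x ∈ K` with `d(x,p) < R`. -/
theorem abstract_point_picking {X : Type*} [MetricSpace X] (K : Set X) (hK : IsCompact K)
    (h : X → ℝ) (hc : ContinuousOn h K) (hnn : ∀ x ∈ K, 0 ≤ h x)
    (q : X) (hq : q ∈ K) (hq0 : 0 < h q) (r : ℝ) (hr : 0 < r)
    (hball : closedBall q r ⊆ K) :
    ∃ p ∈ closedBall q r ∩ K, 0 < r - dist p q ∧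
      h q * r ≤ h p * (r - dist p q) ∧
      ∀ x ∈ K, dist x p < r - dist p q →
        h x ≤ h p * (r - dist p q) / ((r - dist p q) - dist x p) := by
  have hBcomp : IsCompact (closedBall q r) :=
    hK.of_isClosed_subset Metric.isClosed_closedBall hball
  have hfc : ContinuousOn (fun x => h x * (r - dist x q)) (closedBall q r) :=
    (hc.mono hball).mul (continuous_const.sub (Continuous.dist continuous_id continuous_const)).continuousOn
  obtain ⟨p, hpB, hpmax⟩ := hBcomp.exists_isMaxOn
    ⟨q, mem_closedBall_self hr.le⟩ hfc
  have hqB : q ∈ closedBall q r := mem_closedBall_self hr.le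
  have hqmax : h q * (r - dist q q) ≤ h p * (r - dist p q) := hpmax hqB
  simp only [dist_self, sub_zero] at hqmax
  have hpK : p ∈ K := hball hpB
  have hpos : 0 < h p * (r - dist p q) := lt_of_lt_of_le (by positivity) hqmax
  have hR : 0 < r - dist p q := by
    by_contra hle
    push_neg at hle
    have : h p * (r - dist p q) ≤ 0 :=
      mul_nonpos_of_nonneg_of_nonpos (hnn p hpK) (by linarith)
    linarith
  refine ⟨p, ⟨hpB, hpK⟩, hR, hqmax, fun x hxK hxd => ?_⟩
  have hxB : x ∈ closedBall q r := by
    have := dist_triangle x p q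
    simp [mem_closedBall]
    linarith
  have hxmax : h x * (r - dist x q) ≤ h p * (r - dist p q) := hpmax hxB
  have htri : r - dist p q - dist x p ≤ r - dist x q := by
    have := dist_triangle x p q
    linarith
  have hden : 0 < r - dist p q - dist x p := by linarith
  rw [le_div_iff₀ hden]
  calc h x * (r - dist p q - dist x p) ≤ h x * (r - dist x q) :=
        mul_le_mul_of_nonneg_left htri (hnn x hxK)
    _ ≤ h p * (r - dist p q) := hxmax
end
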